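/- The quantitative semantics of STL is sound with respect to the Boolean semantics: for any STL formula φ, trace w, and time t, if ρ(φ,w,t) > 0 then w,t ⊨ φ, and if ρ(φ,w,t) < 0 then w,t ⊭ φ. -/

import Mathlib

inductive STL (X : Type*) where
  | top : STL X
  | atom : (X → ℝ) → STL X
  | neg : STL X → STL X
  | conj : STL X → STL X → STL X
  | untl : STL X → STL X → STL X

def STL.sat {X : Type*} (w : ℕ → X) : STL X → ℕ → Prop
  | .top, _ => True
  | .atom f, t => f (w t) > 0
  | .neg φ, t => ¬ STL.sat w φ t
  | .conj φ ψ, t => STL.sat w φ t ∧ STL.sat w ψ t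
  | .untl φ ψ, t => ∃ t', t ≤ t' ∧ STL.sat w ψ t' ∧ ∀ t'', t ≤ t'' → t'' < t' → STL.sat w φ t''

/-- Quantitative semantics of STL with values in the extended reals. -/
noncomputable def STL.rho {X : Type*} (w : ℕ → X) : STL X → ℕ → EReal
  | .top, _ => ⊤
  | .atom f, t => ((f (w t) : ℝ) : EReal)
  | .neg φ, t => - STL.rho w φ t
  | .conj φ ψ, t => min (STL.rho w φ t) (STL.rho w ψ t)
  | .untl φ ψ, t =>
      ⨆ t' : {t' : ℕ // t ≤ t'},
        min (STL.rho w ψ t'.1)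
          (⨅ t'' : {t'' : ℕ // t ≤ t'' ∧ t'' < t'.1}, STL.rho w φ t''.1)

/-- soundness of the quantitative semantics w.r.t. the Boolean semantics:
positive robustness implies satisfaction, negative robustness implies violation. -/
theorem stl_quantitative_sound {X : Type*} (w : ℕ → X) (φ : STL X) (t : ℕ) :
    ((0 : EReal) < STL.rho w φ t → STL.sat w φ t) ∧
    (STL.rho w φ t < (0 : EReal) → ¬ STL.sat w φ t) := by
  induction φ generalizing t with
  | top =>
    refine ⟨fun _ => trivial, fun h => ?_⟩
    simp [STL.rho] at h
  | atom f =>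
    constructor
    · intro h
      simpa [STL.sat, STL.rho, ← EReal.coe_zero, EReal.coe_lt_coe_iff] using h
    · intro h hs
      rw [STL.rho, show ((0:EReal) = ((0:ℝ):EReal)) from rfl, EReal.coe_lt_coe_iff] at h
      exact absurd hs (not_lt.mpr h.le)
  | neg φ ih =>
    rw [STL.rho, STL.sat]
    constructor
    · intro h hs
      rw [neg_zero.symm, EReal.neg_lt_neg_iff] at h
      exact (ih t).2 h hs
    · intro h
      rw [neg_zero.symm, EReal.neg_lt_neg_iff] at h
      exact not_not.mpr ((ih t).1 h)
  | conj φ ψ ihφ ihψ =>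
    rw [STL.rho, STL.sat]
    constructor
    · intro h
      rw [lt_min_iff] at h
      exact ⟨(ihφ t).1 h.1, (ihψ t).1 h.2⟩
    · intro h hs
      rw [min_lt_iff] at h
      rcases h with h | h
      · exact (ihφ t).2 h hs.1
      · exact (ihψ t).2 h hs.2
  | untl φ ψ ihφ ihψ =>
    rw [STL.rho, STL.sat]
    constructor
    · intro h
      rw [lt_iSup_iff] at h
      obtain ⟨⟨t', ht'⟩, h⟩ := h
      rw [lt_min_iff] at h
      refine ⟨t', ht', (ihψ t').1 h.1, fun t'' h1 h2 => ?_⟩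
      exact (ihφ t'').1 (lt_of_lt_of_le h.2 (iInf_le _ (⟨t'', h1, h2⟩ : {s : ℕ // t ≤ s ∧ s < t'})))
    · intro h hs
      obtain ⟨t', ht', hψ, hφ⟩ := hs
      have hterm : min (STL.rho w ψ t')
          (⨅ t'' : {t'' : ℕ // t ≤ t'' ∧ t'' < t'}, STL.rho w φ t''.1) < 0 :=
        lt_of_le_of_lt (le_iSup (fun s : {t' : ℕ // t ≤ t'} =>
          min (STL.rho w ψ s.1)
            (⨅ t'' : {t'' : ℕ // t ≤ t'' ∧ t'' < s.1}, STL.rho w φ t''.1)) ⟨t', ht'⟩) h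
      rw [min_lt_iff] at hterm
      rcases hterm with hterm | hterm
      · exact (ihψ t').2 hterm hψ
      · obtain ⟨⟨t'', h1, h2⟩, ht''⟩ := (iInf_lt_iff).mp hterm
        exact (ihφ t'').2 ht'' (hφ t'' h1 h2)
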